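/- arXiv:2012.08378 — 10 statements merged into one kernel-verified Lean document; each statement's English description precedes it below -/
import Mathlib

section
/- Let C be a 4×4 real matrix (indexed over Fin 1 ⊕ Fin 3) with block form C = [[1, 0ᵀ],[b, C̃]], where b is a 3×1 real column and C̃ a 3×3 real matrix (the Pauli-transfer-matrix form of a trace-preserving single-qubit channel). Then there exist 3×3 real matrices Ũ and Ṽ that are special orthogonal (ŨᵀŨ = I, det Ũ = 1, and likewise for Ṽ) and a vector d ∈ ℝ³ such that C = U·D·Vᵀ, where U = [[1,0ᵀ],[0, Ũ]], V = [[1,0ᵀ],[0, Ṽ]], and D = [[1,0ᵀ],[Ũᵀb, diag(d)]]. In particular C̃ = Ũ·diag(d)·Ṽᵀ. -/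
open Matrix

noncomputable section

/-- SVD of a real square matrix with orthogonal factors. -/
lemma svd_real {n : ℕ} (M : Matrix (Fin n) (Fin n) ℝ) :
    ∃ (U V : Matrix (Fin n) (Fin n) ℝ) (d : Fin n → ℝ),
      Uᵀ * U = 1 ∧ Vᵀ * V = 1 ∧ M = U * Matrix.diagonal d * Vᵀ := by
  have hPSD : (Mᵀ * M).PosSemidef := by
    simpa using Matrix.posSemidef_conjTranspose_mul_self M
  have hA : (Mᵀ * M).IsHermitian := hPSD.isHermitian
  set V : Matrix (Fin n) (Fin n) ℝ := (hA.eigenvectorUnitary : Matrix (Fin n) (Fin n) ℝ) with hVdef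
  have hVmem := hA.eigenvectorUnitary.2
  rw [Matrix.mem_unitaryGroup_iff'] at hVmem
  have hV : Vᵀ * V = 1 := by
    simpa [Matrix.star_eq_conjTranspose] using hVmem
  have hVV : V * Vᵀ = 1 := mul_eq_one_comm.mp hV
  set μ := hA.eigenvalues with hμdef
  have hμ : ∀ i, 0 ≤ μ i := fun i => hPSD.eigenvalues_nonneg i
  have hspec : Mᵀ * M = V * Matrix.diagonal μ * Vᵀ := by
    have := hA.spectral_theorem
    simpa [Matrix.star_eq_conjTranspose] using this
  set σ : Fin n → ℝ := fun i => Real.sqrt (μ i) with hσdef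
  have hσsq : ∀ i, σ i * σ i = μ i := fun i => Real.mul_self_sqrt (hμ i)
  set W := M * V with hWdef
  have hW : Wᵀ * W = Matrix.diagonal μ := by
    have h1 : Wᵀ * W = Vᵀ * (Mᵀ * M) * V := by
      rw [hWdef, Matrix.transpose_mul]; noncomm_ring
    rw [h1, hspec]
    calc Vᵀ * (V * Matrix.diagonal μ * Vᵀ) * V
        = (Vᵀ * V) * Matrix.diagonal μ * (Vᵀ * V) := by noncomm_ring
      _ = Matrix.diagonal μ := by rw [hV, one_mul, mul_one]
  have hWentry : ∀ i j, (∑ k, W k i * W k j) = Matrix.diagonal μ i j := by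
    intro i j
    rw [← hW]
    simp [Matrix.mul_apply, Matrix.transpose_apply]
  -- columns of W with nonzero σ, normalized
  set v : Fin n → EuclideanSpace ℝ (Fin n) := fun i => WithLp.toLp 2 (fun j => (σ i)⁻¹ * W j i) with hvdef
  set s : Set (Fin n) := {i | σ i ≠ 0} with hsdef
  have hWzero : ∀ i ∉ s, ∀ j, W j i = 0 := by
    intro i hi j
    have hμ0 : μ i = 0 := by
      have : σ i = 0 := by simpa [hsdef] using hi
      rw [← hσsq i, this, mul_zero]
    have hsum : (∑ k, W k i * W k i) = 0 := by
      rw [hWentry i i, Matrix.diagonal_apply_eq, hμ0]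
    have := (Finset.sum_eq_zero_iff_of_nonneg (fun k _ => mul_self_nonneg (W k i))).mp hsum j (Finset.mem_univ j)
    exact mul_self_eq_zero.mp this
  have horth : Orthonormal ℝ (s.restrict v) := by
    rw [orthonormal_iff_ite]
    rintro ⟨i, hi⟩ ⟨j, hj⟩
    simp only [Set.restrict_apply, Subtype.mk.injEq]
    have hinner : (inner ℝ (v i) (v j) : ℝ) = (σ i)⁻¹ * (σ j)⁻¹ * Matrix.diagonal μ i j := by
      rw [← hWentry i j]
      simp only [PiLp.inner_apply, RCLike.inner_apply, starRingEnd_apply, star_trivial, hvdef, PiLp.toLp_apply]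
      rw [Finset.mul_sum]
      congr 1; ext k; ring
    by_cases hij : i = j
    · subst hij
      rw [if_pos rfl]
      change inner ℝ (v i) (v i) = 1
      rw [hinner, Matrix.diagonal_apply_eq, ← hσsq i]
      have hσi : σ i ≠ 0 := hi
      field_simp
    · rw [if_neg hij]
      change inner ℝ (v i) (v j) = 0
      rw [hinner, Matrix.diagonal_apply_ne _ hij, mul_zero]
  have hcard : Module.finrank ℝ (EuclideanSpace ℝ (Fin n)) = Fintype.card (Fin n) := by
    simp
  obtain ⟨bb, hbb⟩ := horth.exists_orthonormalBasis_extension_of_card_eq hcard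
  set U : Matrix (Fin n) (Fin n) ℝ := fun j i => bb i j with hUdef
  have hU : Uᵀ * U = 1 := by
    ext i j
    have := orthonormal_iff_ite.mp bb.orthonormal i j
    simp only [PiLp.inner_apply, RCLike.inner_apply, starRingEnd_apply, star_trivial] at this
    simp only [Matrix.mul_apply, Matrix.transpose_apply, Matrix.one_apply]
    rw [← this]
    exact Finset.sum_congr rfl (fun k _ => mul_comm _ _)
  have hWU : W = U * Matrix.diagonal σ := by
    ext j i
    rw [Matrix.mul_diagonal]
    by_cases hi : i ∈ s
    · rw [hUdef]
      show W j i = bb i j * σ i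
      rw [hbb i hi]
      show W j i = (σ i)⁻¹ * W j i * σ i
      have : σ i ≠ 0 := hi
      field_simp
    · have hσ0 : σ i = 0 := by
        by_contra h; exact hi h
      rw [hWzero i hi j, hσ0, mul_zero]
  refine ⟨U, V, σ, hU, hV, ?_⟩
  have : M = W * Vᵀ := by
    rw [hWdef, mul_assoc, hVV, mul_one]
  rw [this, hWU]

/-- SVD with special orthogonal factors. -/
lemma svd_real_SO {n : ℕ} (hn : 0 < n) (M : Matrix (Fin n) (Fin n) ℝ) :
    ∃ (U V : Matrix (Fin n) (Fin n) ℝ) (d : Fin n → ℝ),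
      Uᵀ * U = 1 ∧ U.det = 1 ∧ Vᵀ * V = 1 ∧ V.det = 1 ∧
      M = U * Matrix.diagonal d * Vᵀ := by
  obtain ⟨U, V, σ, hU, hV, hM⟩ := svd_real M
  have hdetU : U.det * U.det = 1 := by
    have := congrArg Matrix.det hU
    simpa [Matrix.det_mul] using this
  have hdetV : V.det * V.det = 1 := by
    have := congrArg Matrix.det hV
    simpa [Matrix.det_mul] using this
  set i0 : Fin n := ⟨0, hn⟩
  set g : Fin n → ℝ := fun i => if i = i0 then U.det else 1 with hgdef
  set f : Fin n → ℝ := fun i => if i = i0 then V.det else 1 with hfdef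
  have hg1 : ∀ i, g i * g i = 1 := by
    intro i; by_cases h : i = i0 <;> simp [hgdef, h, hdetU]
  have hf1 : ∀ i, f i * f i = 1 := by
    intro i; by_cases h : i = i0 <;> simp [hfdef, h, hdetV]
  have hgg : Matrix.diagonal g * Matrix.diagonal g = 1 := by
    rw [Matrix.diagonal_mul_diagonal, show (fun i => g i * g i) = fun _ => (1:ℝ) from funext hg1]
    exact Matrix.diagonal_one
  have hff : Matrix.diagonal f * Matrix.diagonal f = 1 := by
    rw [Matrix.diagonal_mul_diagonal, show (fun i => f i * f i) = fun _ => (1:ℝ) from funext hf1]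
    exact Matrix.diagonal_one
  have hprodg : ∏ i, g i = U.det := by
    simp [hgdef]
  have hprodf : ∏ i, f i = V.det := by
    simp [hfdef]
  refine ⟨U * Matrix.diagonal g, V * Matrix.diagonal f, fun i => g i * σ i * f i,
    ?_, ?_, ?_, ?_, ?_⟩
  · rw [Matrix.transpose_mul, Matrix.diagonal_transpose]
    calc Matrix.diagonal g * Uᵀ * (U * Matrix.diagonal g)
        = Matrix.diagonal g * (Uᵀ * U) * Matrix.diagonal g := by noncomm_ring
      _ = 1 := by rw [hU, mul_one, hgg]
  · rw [Matrix.det_mul, Matrix.det_diagonal, hprodg, hdetU]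
  · rw [Matrix.transpose_mul, Matrix.diagonal_transpose]
    calc Matrix.diagonal f * Vᵀ * (V * Matrix.diagonal f)
        = Matrix.diagonal f * (Vᵀ * V) * Matrix.diagonal f := by noncomm_ring
      _ = 1 := by rw [hV, mul_one, hff]
  · rw [Matrix.det_mul, Matrix.det_diagonal, hprodf, hdetV]
  · rw [hM, Matrix.transpose_mul, Matrix.diagonal_transpose]
    have hd : Matrix.diagonal (fun i => g i * σ i * f i)
        = Matrix.diagonal g * Matrix.diagonal σ * Matrix.diagonal f := by
      simp [Matrix.diagonal_mul_diagonal]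
    rw [hd]
    symm
    calc U * Matrix.diagonal g * (Matrix.diagonal g * Matrix.diagonal σ * Matrix.diagonal f)
          * (Matrix.diagonal f * Vᵀ)
        = U * (Matrix.diagonal g * Matrix.diagonal g) * Matrix.diagonal σ
          * (Matrix.diagonal f * Matrix.diagonal f) * Vᵀ := by noncomm_ring
      _ = U * Matrix.diagonal σ * Vᵀ := by rw [hgg, hff, mul_one, mul_one]

end

/-- Coherent–triangular decomposition of a single-qubit CPTP channel's
Pauli transfer matrix. -/
theorem coherent_triangular_decomposition
    (b : Matrix (Fin 3) (Fin 1) ℝ) (Ct : Matrix (Fin 3) (Fin 3) ℝ)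
    (C : Matrix (Fin 1 ⊕ Fin 3) (Fin 1 ⊕ Fin 3) ℝ)
    (hC : C = Matrix.fromBlocks 1 0 b Ct) :
    ∃ (U V : Matrix (Fin 3) (Fin 3) ℝ) (d : Fin 3 → ℝ),
      Uᵀ * U = 1 ∧ U.det = 1 ∧ Vᵀ * V = 1 ∧ V.det = 1 ∧
      C = Matrix.fromBlocks 1 0 0 U *
            Matrix.fromBlocks 1 0 (Uᵀ * b) (Matrix.diagonal d) *
            (Matrix.fromBlocks 1 0 0 V)ᵀ ∧
      Ct = U * Matrix.diagonal d * Vᵀ := by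
  obtain ⟨U, V, d, hU, hUdet, hV, hVdet, hM⟩ := svd_real_SO (by norm_num) Ct
  refine ⟨U, V, d, hU, hUdet, hV, hVdet, ?_, hM⟩
  have hUU : U * Uᵀ = 1 := mul_eq_one_comm.mp hU
  rw [hC, hM, Matrix.fromBlocks_transpose, Matrix.fromBlocks_multiply,
    Matrix.fromBlocks_multiply]
  simp [← Matrix.mul_assoc, hUU]
end

section
/- Let ε be a real number with 0 ≤ ε < 3/4 and let d : Fin 4 → ℝ satisfy d 0 = 1, 0 < d i ≤ 1 for all i ≠ 0, and Σ_{i≠0} d i = 3 − 4ε (so that the Pauli channel with Pauli-transfer-matrix diagonal d has gate error probability ε). Then (1/4)·Σ_{i} |(H.mulVec (fun j => (d j)⁻¹)) i| ≥ (3 + 2ε)/(3 − 4ε). That is, among single-qubit Pauli channels with gate error probability ε, the depolarizing channel minimizes the 1-norm of the quasi-probability representation. -/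
open Matrix Finset

/-- The 4×4 real Hadamard matrix whose columns are the Pauli-transfer-matrix
diagonals of the single-qubit Pauli operators I, X, Y, Z. -/
def Hmat : Matrix (Fin 4) (Fin 4) ℝ :=
  !![1, 1, 1, 1;
     1, 1, -1, -1;
     1, -1, 1, -1;
     1, -1, -1, 1]

/-- Among single-qubit Pauli channels with gate error probability ε, the
depolarizing channel minimizes the 1-norm of the quasi-probability
representation. -/
theorem depolarizing_minimizes_qpr_one_norm
    (ε : ℝ) (hε0 : 0 ≤ ε) (hε1 : ε < 3 / 4) (d : Fin 4 → ℝ)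
    (hd0 : d 0 = 1)
    (hdpos : ∀ i : Fin 4, i ≠ 0 → 0 < d i)
    (hdle : ∀ i : Fin 4, i ≠ 0 → d i ≤ 1)
    (hsum : ∑ i ∈ Finset.univ.filter (fun i : Fin 4 => i ≠ 0), d i = 3 - 4 * ε) :
    (1 / 4) * ∑ i, |(Hmat.mulVec (fun j => (d j)⁻¹)) i| ≥ (3 + 2 * ε) / (3 - 4 * ε) := by
  have ha : (0:ℝ) < d 1 := hdpos 1 (by decide)
  have hb : (0:ℝ) < d 2 := hdpos 2 (by decide)
  have hc : (0:ℝ) < d 3 := hdpos 3 (by decide)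
  have hsum' : d 1 + d 2 + d 3 = 3 - 4 * ε := by
    rw [show (Finset.univ.filter (fun i : Fin 4 => i ≠ 0)) = {1, 2, 3} by decide] at hsum
    have := hsum
    simp [Finset.sum_insert, Finset.mem_insert] at this
    linarith
  set a := d 1
  set b := d 2
  set c := d 3
  set p := a⁻¹ with hp
  set q := b⁻¹ with hq
  set r := c⁻¹ with hr
  have hpp : 0 < p := inv_pos.mpr ha
  have hqp : 0 < q := inv_pos.mpr hb
  have hrp : 0 < r := inv_pos.mpr hc
  have hs : (0:ℝ) < 3 - 4 * ε := by linarith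
  -- AM-HM
  have hamhm : (3 - 4 * ε) * (p + q + r) ≥ 9 := by
    have h1 : a * p = 1 := mul_inv_cancel₀ ha.ne'
    have h2 : b * q = 1 := mul_inv_cancel₀ hb.ne'
    have h3 : c * r = 1 := mul_inv_cancel₀ hc.ne'
    have e12 : (a*q)*(b*p) = 1 := by
      have : (a*q)*(b*p) = (a*p)*(b*q) := by ring
      rw [this, h1, h2]; ring
    have e23 : (b*r)*(c*q) = 1 := by
      have : (b*r)*(c*q) = (b*q)*(c*r) := by ring
      rw [this, h2, h3]; ring
    have e13 : (a*r)*(c*p) = 1 := by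
      have : (a*r)*(c*p) = (a*p)*(c*r) := by ring
      rw [this, h1, h3]; ring
    have l12 : a*q + b*p ≥ 2 := by nlinarith [sq_nonneg (a*q - 1), mul_pos hb hpp]
    have l23 : b*r + c*q ≥ 2 := by nlinarith [sq_nonneg (b*r - 1), mul_pos hc hqp]
    have l13 : a*r + c*p ≥ 2 := by nlinarith [sq_nonneg (a*r - 1), mul_pos hc hpp]
    have expand : (3 - 4 * ε) * (p + q + r)
        = a*p + b*q + c*r + (a*q + b*p) + (b*r + c*q) + (a*r + c*p) := by
      rw [← hsum']; ring
    rw [expand, h1, h2, h3]; linarith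
  have m0 : Hmat.mulVec (fun j => (d j)⁻¹) 0 = 1 + p + q + r := by
    simp [Hmat, Matrix.mulVec, dotProduct, Fin.sum_univ_four, hd0]; try ring
  have m1 : Hmat.mulVec (fun j => (d j)⁻¹) 1 = 1 + p - q - r := by
    simp [Hmat, Matrix.mulVec, dotProduct, Fin.sum_univ_four, hd0]; try ring
  have m2 : Hmat.mulVec (fun j => (d j)⁻¹) 2 = 1 - p + q - r := by
    simp [Hmat, Matrix.mulVec, dotProduct, Fin.sum_univ_four, hd0]; try ring
  have m3 : Hmat.mulVec (fun j => (d j)⁻¹) 3 = 1 - p - q + r := by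
    simp [Hmat, Matrix.mulVec, dotProduct, Fin.sum_univ_four, hd0]; try ring
  have hexp : ∑ i, |(Hmat.mulVec (fun j => (d j)⁻¹)) i|
      = |1 + p + q + r| + |1 + p - q - r| + |1 - p + q - r| + |1 - p - q + r| := by
    rw [Fin.sum_univ_four, m0, m1, m2, m3]
  rw [hexp]
  have h0 : |1 + p + q + r| ≥ 1 + p + q + r := le_abs_self _
  have h1 : |1 + p - q - r| ≥ -(1 + p - q - r) := neg_le_abs _
  have h2 : |1 - p + q - r| ≥ -(1 - p + q - r) := neg_le_abs _
  have h3 : |1 - p - q + r| ≥ -(1 - p - q + r) := neg_le_abs _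
  have key : (1/4 : ℝ) * (|1 + p + q + r| + |1 + p - q - r| + |1 - p + q - r| + |1 - p - q + r|)
      ≥ (p + q + r - 1) / 2 := by linarith
  have h9 : (p + q + r - 1) / 2 ≥ (3 + 2 * ε) / (3 - 4 * ε) := by
    rw [ge_iff_le, div_le_div_iff₀ hs (by norm_num)]
    nlinarith
  linarith
end

section
/- Fix a real number ε with 0 < ε < 1 and define h(M) = (M(1+ε) − (1+2ε))/(M(1−ε) − 1) for real M. Then the function M ↦ h(M)² − 1 is strictly antitone on the interval (1/(1−ε), ∞). (h(M)² − 1 is the sampling overhead factor of the depolarizing channel over N qubits when M = 4^N, so the SOF of depolarizing channels with fixed generalized gate error probability ε decreases as the number of qubits grows.) -/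
/-- The sampling overhead factor of the depolarizing channel, viewed as a
function of M = 4^N, is strictly decreasing on (1/(1−ε), ∞). -/
theorem depolarizing_sof_strictAntiOn
    (ε : ℝ) (hε0 : 0 < ε) (hε1 : ε < 1) :
    StrictAntiOn
      (fun M : ℝ => ((M * (1 + ε) - (1 + 2 * ε)) / (M * (1 - ε) - 1)) ^ 2 - 1)
      (Set.Ioi (1 / (1 - ε))) := by
  intro a ha b hb hab
  simp only [Set.mem_Ioi] at ha hb
  have h1ε : 0 < 1 - ε := by linarith
  have hDa : 0 < a * (1 - ε) - 1 := by
    have := (div_lt_iff₀ h1ε).mp ha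
    linarith
  have hDb : 0 < b * (1 - ε) - 1 := by
    have := (div_lt_iff₀ h1ε).mp hb
    linarith
  have hNb : 0 < b * (1 + ε) - (1 + 2 * ε) := by nlinarith
  have hlt : (b * (1 + ε) - (1 + 2 * ε)) / (b * (1 - ε) - 1)
      < (a * (1 + ε) - (1 + 2 * ε)) / (a * (1 - ε) - 1) := by
    rw [div_lt_div_iff₀ hDb hDa]
    nlinarith [mul_pos hε0 hε0, sub_pos.mpr hab]
  have h0 : 0 ≤ (b * (1 + ε) - (1 + 2 * ε)) / (b * (1 - ε) - 1) :=
    le_of_lt (div_pos hNb hDb)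
  have := pow_lt_pow_left₀ hlt h0 (by norm_num : 2 ≠ 0)
  simpa using sub_lt_sub_right this 1
end

section
/- Fix a real number ε with 0 < ε < 1 and define h(M) = (M(1+ε) − (1+2ε))/(M(1−ε) − 1) for real M. Then: (a) h(M)² − 1 tends to 4ε/(1−ε)² as M → ∞; and (b) for every real M with M(1−ε) > 1 one has h(M)² − 1 > 4ε/(1−ε)². In particular the sampling overhead factor of any depolarizing channel with generalized gate error probability ε is bounded below by 4ε/(1−ε)². -/
open Filter

/-- The sampling overhead factor of the depolarizing channel with generalized
gate error probability ε tends to 4ε/(1−ε)² as M → ∞, and is strictly above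
that limit for every admissible M. -/
theorem depolarizing_sof_limit_and_lower_bound
    (ε : ℝ) (hε0 : 0 < ε) (hε1 : ε < 1) :
    Tendsto
      (fun M : ℝ => ((M * (1 + ε) - (1 + 2 * ε)) / (M * (1 - ε) - 1)) ^ 2 - 1)
      atTop (nhds (4 * ε / (1 - ε) ^ 2)) ∧
    ∀ M : ℝ, M * (1 - ε) > 1 →
      ((M * (1 + ε) - (1 + 2 * ε)) / (M * (1 - ε) - 1)) ^ 2 - 1 >
        4 * ε / (1 - ε) ^ 2 := by
  have hne : (1 - ε) ≠ 0 := by linarith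
  constructor
  · have ha : Tendsto (fun M : ℝ => (1 + ε) - (1 + 2 * ε) / M) atTop
        (nhds (1 + ε)) := by
      simpa using tendsto_const_nhds.sub
        ((tendsto_const_nhds : Tendsto (fun _ : ℝ => (1 + 2 * ε)) atTop
          (nhds (1 + 2 * ε))).div_atTop tendsto_id)
    have hb : Tendsto (fun M : ℝ => (1 - ε) - 1 / M) atTop (nhds (1 - ε)) := by
      simpa using tendsto_const_nhds.sub
        ((tendsto_const_nhds : Tendsto (fun _ : ℝ => (1 : ℝ)) atTop
          (nhds 1)).div_atTop tendsto_id)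
    have h1 : Tendsto (fun M : ℝ => (M * (1 + ε) - (1 + 2 * ε)) / (M * (1 - ε) - 1))
        atTop (nhds ((1 + ε) / (1 - ε))) := by
      refine Tendsto.congr' ?_ (ha.div hb hne)
      filter_upwards [eventually_gt_atTop (0 : ℝ)] with M hM
      have hM' : M ≠ 0 := ne_of_gt hM
      simp only [Pi.div_apply]
      field_simp
    have h2 : Tendsto (fun M : ℝ => ((M * (1 + ε) - (1 + 2 * ε)) / (M * (1 - ε) - 1)) ^ 2 - 1)
        atTop (nhds (((1 + ε) / (1 - ε)) ^ 2 - 1)) := (h1.pow 2).sub tendsto_const_nhds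
    have hval : ((1 + ε) / (1 - ε)) ^ 2 - 1 = 4 * ε / (1 - ε) ^ 2 := by
      field_simp
      ring
    rwa [hval] at h2
  · intro M hM
    have hd : 0 < M * (1 - ε) - 1 := by linarith
    have hc : (0 : ℝ) < (1 + ε) / (1 - ε) := div_pos (by linarith) (by linarith)
    have key : (1 + ε) / (1 - ε) < (M * (1 + ε) - (1 + 2 * ε)) / (M * (1 - ε) - 1) := by
      rw [div_lt_div_iff₀ (by linarith) hd]
      nlinarith
    have hsq : ((1 + ε) / (1 - ε)) ^ 2 <
        ((M * (1 + ε) - (1 + 2 * ε)) / (M * (1 - ε) - 1)) ^ 2 :=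
      pow_lt_pow_left₀ key (le_of_lt hc) (by norm_num)
    have hval : ((1 + ε) / (1 - ε)) ^ 2 - 1 = 4 * ε / (1 - ε) ^ 2 := by
      field_simp
      ring
    linarith [hsq, hval.ge, hval.le]
end

section
/- Let ι be a nonempty finite type, let ε be a real number with 0 ≤ ε < 1/2, and let A be a matrix indexed by ι with real nonnegative entries such that every column of A sums to ε. Set C = (1−ε)·I + A. Then C is invertible, for every column index j the ℓ1 norm of the j-th column of C⁻¹ satisfies Σ_i |C⁻¹ i j| ≤ 1/(1 − 2ε), and consequently (Σ_i |C⁻¹ i j|)² − 1 ≤ 4ε(1−ε)/(1−2ε)². -/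
open Matrix Finset

attribute [local instance] Matrix.linftyOpNormedRing Matrix.linftyOpNormedAlgebra

/-- Sampling-overhead upper bound for Pauli channels, matrix form: if
C = (1−ε)·I + A with A entrywise nonnegative and all column sums equal to ε
(0 ≤ ε < 1/2), then C is invertible, every column of C⁻¹ has ℓ1 norm at most
1/(1−2ε), and hence the SOF is at most 4ε(1−ε)/(1−2ε)². -/
theorem pauli_sof_upper_bound
    {ι : Type*} [Fintype ι] [Nonempty ι] [DecidableEq ι]
    (ε : ℝ) (hε0 : 0 ≤ ε) (hε1 : ε < 1 / 2)
    (A : Matrix ι ι ℝ)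
    (hA : ∀ i j, 0 ≤ A i j)
    (hcol : ∀ j, ∑ i, A i j = ε)
    (C : Matrix ι ι ℝ) (hC : C = (1 - ε) • (1 : Matrix ι ι ℝ) + A) :
    IsUnit C.det ∧
    (∀ j, ∑ i, |C⁻¹ i j| ≤ 1 / (1 - 2 * ε)) ∧
    (∀ j, (∑ i, |C⁻¹ i j|) ^ 2 - 1 ≤ 4 * ε * (1 - ε) / (1 - 2 * ε) ^ 2) := by
  have hcomplete : CompleteSpace (Matrix ι ι ℝ) := FiniteDimensional.complete ℝ _
  have h1ε : (0:ℝ) < 1 - ε := by linarith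
  have h2ε : (0:ℝ) < 1 - 2 * ε := by linarith
  -- norm of Aᵀ
  have hAnorm : ‖Aᵀ‖ = ε := by
    rw [Matrix.linfty_opNorm_def]
    have : ((Finset.univ : Finset ι).sup fun i : ι => ∑ j : ι, ‖Aᵀ i j‖₊) = ⟨ε, hε0⟩ := by
      have h : ∀ i : ι, (∑ j : ι, ‖Aᵀ i j‖₊) = (⟨ε, hε0⟩ : NNReal) := by
        intro i
        ext
        push_cast
        simp only [Matrix.transpose_apply, coe_nnnorm, Real.norm_eq_abs]
        change _ = ε; rw [← hcol i]
        exact Finset.sum_congr rfl fun j _ => abs_of_nonneg (hA j i)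
      rw [Finset.sup_congr rfl (fun i _ => h i)]
      exact Finset.sup_const Finset.univ_nonempty _
    rw [this]
    rfl
  set t : Matrix ι ι ℝ := -((1 - ε)⁻¹ • Aᵀ) with ht_def
  have htnorm : ‖t‖ = ε / (1 - ε) := by
    rw [ht_def, norm_neg, norm_smul, hAnorm, Real.norm_eq_abs,
      abs_of_nonneg (inv_nonneg.2 h1ε.le)]
    rw [inv_mul_eq_div]
  have ht1 : ‖t‖ < 1 := by
    rw [htnorm, div_lt_one h1ε]; linarith
  have hCt : Cᵀ = (1 - ε) • ((1 : Matrix ι ι ℝ) - t) := by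
    rw [hC, Matrix.transpose_add, Matrix.transpose_smul, Matrix.transpose_one, ht_def]
    rw [sub_neg_eq_add, smul_add, smul_smul, mul_inv_cancel₀ h1ε.ne', one_smul]
  -- invertibility of 1 - t
  have hunit : IsUnit ((1 : Matrix ι ι ℝ) - t) := isUnit_one_sub_of_norm_lt_one ht1
  have hdet1t : IsUnit ((1 : Matrix ι ι ℝ) - t).det :=
    (Matrix.isUnit_iff_isUnit_det _).mp hunit
  have hdetCt : IsUnit Cᵀ.det := by
    rw [hCt, Matrix.det_smul]
    exact (IsUnit.mk0 ((1 - ε) ^ Fintype.card ι) (by positivity)).mul hdet1t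
  have hdetC : IsUnit C.det := by
    rw [← Matrix.det_transpose]; exact hdetCt
  have hbound : ∀ j, ∑ i, |C⁻¹ i j| ≤ 1 / (1 - 2 * ε) := by
    intro j
    -- inverse of Cᵀ
    have hinv1t : ((1 : Matrix ι ι ℝ) - t)⁻¹ = ∑' n : ℕ, t ^ n := by
      rw [Matrix.nonsing_inv_eq_ringInverse]; exact (geom_series_eq_inverse t ht1).symm
    have hnorm1t : ‖((1 : Matrix ι ι ℝ) - t)⁻¹‖ ≤ (1 - ‖t‖)⁻¹ := by
      rw [hinv1t]
      have := tsum_geometric_le_of_norm_lt_one t ht1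
      rw [norm_one, sub_self, zero_add] at this
      exact this
    have hCtinv : Cᵀ⁻¹ = (1 - ε)⁻¹ • ((1 : Matrix ι ι ℝ) - t)⁻¹ := by
      rw [hCt]
      have := Matrix.inv_smul' (A := (1 : Matrix ι ι ℝ) - t) (Units.mk0 (1 - ε) h1ε.ne') hdet1t
      simpa [Units.smul_def] using this
    have hnormCtinv : ‖Cᵀ⁻¹‖ ≤ 1 / (1 - 2 * ε) := by
      rw [hCtinv]
      calc ‖(1 - ε)⁻¹ • ((1 : Matrix ι ι ℝ) - t)⁻¹‖
          = (1 - ε)⁻¹ * ‖((1 : Matrix ι ι ℝ) - t)⁻¹‖ := by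
            rw [norm_smul, Real.norm_eq_abs, abs_of_nonneg (inv_nonneg.2 h1ε.le)]
        _ ≤ (1 - ε)⁻¹ * (1 - ‖t‖)⁻¹ := by
            apply mul_le_mul_of_nonneg_left hnorm1t (inv_nonneg.2 h1ε.le)
        _ = 1 / (1 - 2 * ε) := by
            rw [htnorm]
            rw [one_div, ← mul_inv]
            congr 1
            field_simp
            ring
    -- row sum of Cᵀ⁻¹ at row j equals column sum of C⁻¹ at column j
    have hrow : ∑ i, |C⁻¹ i j| = ∑ i, ‖Cᵀ⁻¹ j i‖ := by
      refine Finset.sum_congr rfl fun i _ => ?_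
      rw [← Matrix.transpose_nonsing_inv, Matrix.transpose_apply, Real.norm_eq_abs]
    rw [hrow]
    calc ∑ i, ‖Cᵀ⁻¹ j i‖ ≤ ‖Cᵀ⁻¹‖ := by
          have : (∑ i, ‖Cᵀ⁻¹ j i‖₊) ≤ ‖Cᵀ⁻¹‖₊ := by
            rw [Matrix.linfty_opNNNorm_def]
            exact Finset.le_sup (f := fun i => ∑ k, ‖Cᵀ⁻¹ i k‖₊) (Finset.mem_univ j)
          have h' := NNReal.coe_le_coe.2 this
          push_cast at h'
          simpa using h'
      _ ≤ 1 / (1 - 2 * ε) := hnormCtinv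
  refine ⟨hdetC, hbound, ?_⟩
  · intro j
    have hb := hbound j
    have hnn : 0 ≤ ∑ i, |C⁻¹ i j| := Finset.sum_nonneg fun i _ => abs_nonneg _
    have hsq : (∑ i, |C⁻¹ i j|) ^ 2 ≤ (1 / (1 - 2 * ε)) ^ 2 :=
      pow_le_pow_left₀ hnn hb 2
    have : (1 / (1 - 2 * ε)) ^ 2 - 1 = 4 * ε * (1 - ε) / (1 - 2 * ε) ^ 2 := by
      field_simp
      ring
    linarith
end

section
/- Let ι be a nonempty finite type, let σ : ι ≃ ι be an involutive permutation with no fixed points (σ∘σ = id and σ i ≠ i for all i), let P be its permutation matrix over ℝ, and let ε be a real number with 0 ≤ ε < 1/2. Set C = (1−ε)·I + ε·P. Then C⁻¹ = (1/(1−2ε))·((1−ε)·I − ε·P), and for every column index j the ℓ1 norm of the j-th column of C⁻¹ equals exactly 1/(1 − 2ε). -/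
open Matrix Finset

/-- Equality case of the sampling-overhead upper bound: for a Pauli channel
with a single type of error, C = (1−ε)·I + ε·P with P the permutation matrix of
a fixed-point-free involution, the inverse is ((1−ε)·I − ε·P)/(1−2ε) and every
column of C⁻¹ has ℓ1 norm exactly 1/(1−2ε). -/
theorem single_error_sof_equality
    {ι : Type*} [Fintype ι] [Nonempty ι] [DecidableEq ι]
    (σ : Equiv.Perm ι)
    (hinv : ∀ i, σ (σ i) = i) (hfix : ∀ i, σ i ≠ i)
    (ε : ℝ) (hε0 : 0 ≤ ε) (hε1 : ε < 1 / 2)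
    (P : Matrix ι ι ℝ) (hP : P = σ.permMatrix ℝ)
    (C : Matrix ι ι ℝ)
    (hC : C = (1 - ε) • (1 : Matrix ι ι ℝ) + ε • P) :
    C⁻¹ = (1 / (1 - 2 * ε)) • ((1 - ε) • (1 : Matrix ι ι ℝ) - ε • P) ∧
    ∀ j, ∑ i, |C⁻¹ i j| = 1 / (1 - 2 * ε) := by
  have hne : (1 - 2 * ε) ≠ 0 := by linarith
  have hP' : ∀ i j, P i j = if σ i = j then 1 else 0 := by
    intro i j
    simp [hP, Equiv.Perm.permMatrix, PEquiv.toMatrix, Equiv.toPEquiv]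
  have hPP : P * P = 1 := by
    ext i j
    simp only [Matrix.mul_apply, hP']
    rw [Finset.sum_eq_single (σ i)]
    · simp [hinv i, Matrix.one_apply, eq_comm]
    · intro k _ hk; simp [Ne.symm hk]
    · simp
  have hinvC : C⁻¹ = (1 / (1 - 2 * ε)) • ((1 - ε) • (1 : Matrix ι ι ℝ) - ε • P) := by
    apply Matrix.inv_eq_right_inv
    rw [hC]
    rw [Matrix.mul_smul, Matrix.mul_sub, Matrix.add_mul, Matrix.add_mul]
    simp only [Matrix.smul_mul, Matrix.mul_smul, Matrix.one_mul, Matrix.mul_one, hPP,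
      smul_smul]
    rw [show ∀ a b c d : ℝ, (a • (1:Matrix ι ι ℝ) + b • P) - (c • P + d • (1:Matrix ι ι ℝ))
        = (a - d) • (1:Matrix ι ι ℝ) + (b - c) • P from by
      intro a b c d; module]
    have h1 : (1 - ε) * (1 - ε) - ε * ε = 1 - 2 * ε := by ring
    have h2 : (1 - ε) * ε - ε * (1 - ε) = 0 := by ring
    rw [h1, h2, zero_smul, add_zero, smul_smul, one_div, inv_mul_cancel₀ hne, one_smul]
  refine ⟨hinvC, fun j => ?_⟩
  have hk : 0 < 1 / (1 - 2 * ε) := div_pos one_pos (by linarith)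
  have habs : ∀ i, |C⁻¹ i j| =
      (1 / (1 - 2 * ε)) * ((1 - ε) * (if i = j then 1 else 0) + ε * (if i = σ j then 1 else 0)) := by
    intro i
    have hσ : (σ i = j) ↔ (i = σ j) := by
      constructor
      · rintro rfl; exact (hinv i).symm
      · rintro rfl; exact hinv j
    rw [hinvC]
    simp only [Matrix.smul_apply, Matrix.sub_apply, Matrix.smul_apply, Matrix.one_apply, hP',
      smul_eq_mul, hσ]
    by_cases h1 : i = j
    · have h2 : ¬ i = σ j := by rw [h1]; exact fun h => hfix j h.symm
      rw [if_pos h1, if_neg h2]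
      rw [abs_of_nonneg (by nlinarith [mul_nonneg hk.le (show (0:ℝ) ≤ 1 - ε by linarith)])]
      ring
    · by_cases h2 : i = σ j
      · rw [if_neg h1, if_pos h2]
        rw [abs_of_nonpos (by nlinarith [hk.le])]
        ring
      · rw [if_neg h1, if_neg h2]; simp
  simp only [habs]
  rw [← Finset.mul_sum, Finset.sum_add_distrib, ← Finset.mul_sum, ← Finset.mul_sum]
  simp only [Finset.sum_ite_eq', Finset.mem_univ, if_true]
  field_simp
  ring
end

section
/- Let η : Fin 4 → ℝ satisfy η i ≥ 0 for all i and Σ_i η i = 1, and write ε = 1 − η 0, assuming ε < 1/2. Let d = H.mulVec η. Then d i ≠ 0 for every i, and (1/4)·Σ_{i} |(H.mulVec (fun j => (d j)⁻¹)) i| ≤ 1/(1 − 2ε). -/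
open Matrix Finset

set_option maxHeartbeats 1600000 in
lemma qpr_key (t P Q R : ℝ) (ht : 0 < t) (ht1 : t ≤ 1)
    (hP1 : 1 ≤ P) (hQ1 : 1 ≤ Q) (hR1 : 1 ≤ R)
    (htP : t * P ≤ 1) (htQ : t * Q ≤ 1) (htR : t * R ≤ 1)
    (hB : t * (P + Q + R) ≤ t + 2) :
    t * (|1 + P + Q + R| + |1 + P - Q - R| + |1 - P + Q - R| + |1 - P - Q + R|) ≤ 4 := by
  have a1 : t * 1 ≤ t * P := mul_le_mul_of_nonneg_left hP1 ht.le
  have a2 : t * 1 ≤ t * Q := mul_le_mul_of_nonneg_left hQ1 ht.le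
  have a3 : t * 1 ≤ t * R := mul_le_mul_of_nonneg_left hR1 ht.le
  rcases abs_cases (1 + P + Q + R) with ⟨e1, _⟩ | ⟨e1, _⟩ <;>
  rcases abs_cases (1 + P - Q - R) with ⟨e2, _⟩ | ⟨e2, _⟩ <;>
  rcases abs_cases (1 - P + Q - R) with ⟨e3, _⟩ | ⟨e3, _⟩ <;>
  rcases abs_cases (1 - P - Q + R) with ⟨e4, _⟩ | ⟨e4, _⟩ <;>
  rw [e1, e2, e3, e4] <;>
  nlinarith [a1, a2, a3, htP, htQ, htR, hB, ht1, ht.le]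

set_option maxHeartbeats 1600000 in
/-- Single-qubit case of the quasi-probability 1-norm bound ‖μ‖₁ ≤ 1/(1−2ε)
for a Pauli channel with probability vector η and gate error probability
ε = 1 − η 0 < 1/2. -/
theorem qpr_one_norm_upper_bound
    (η : Fin 4 → ℝ) (hη : ∀ i, 0 ≤ η i) (hsum : ∑ i, η i = 1)
    (ε : ℝ) (hε : ε = 1 - η 0) (hεlt : ε < 1 / 2)
    (d : Fin 4 → ℝ) (hd : d = Hmat.mulVec η) :
    (∀ i, d i ≠ 0) ∧
    (1 / 4) * ∑ i, |(Hmat.mulVec (fun j => (d j)⁻¹)) i| ≤ 1 / (1 - 2 * ε) := by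
  have h0 := hη 0
  have h1 := hη 1
  have h2 := hη 2
  have h3 := hη 3
  rw [Fin.sum_univ_four] at hsum
  have hd0 : d 0 = 1 := by
    rw [hd]; simp [Hmat, Matrix.mulVec, dotProduct, Fin.sum_univ_four]; linarith
  have hd1 : d 1 = η 0 + η 1 - η 2 - η 3 := by
    rw [hd]; simp [Hmat, Matrix.mulVec, dotProduct, Fin.sum_univ_four]; ring
  have hd2 : d 2 = η 0 - η 1 + η 2 - η 3 := by
    rw [hd]; simp [Hmat, Matrix.mulVec, dotProduct, Fin.sum_univ_four]; ring
  have hd3 : d 3 = η 0 - η 1 - η 2 + η 3 := by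
    rw [hd]; simp [Hmat, Matrix.mulVec, dotProduct, Fin.sum_univ_four]; ring
  set t : ℝ := 1 - 2 * ε with htdef
  have ht : 0 < t := by simp only [htdef]; linarith
  have ht1 : t ≤ 1 := by simp only [htdef]; linarith
  have htd1 : t ≤ d 1 := by rw [hd1]; simp only [htdef]; linarith
  have htd2 : t ≤ d 2 := by rw [hd2]; simp only [htdef]; linarith
  have htd3 : t ≤ d 3 := by rw [hd3]; simp only [htdef]; linarith
  have hd1le : d 1 ≤ 1 := by rw [hd1]; linarith
  have hd2le : d 2 ≤ 1 := by rw [hd2]; linarith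
  have hd3le : d 3 ≤ 1 := by rw [hd3]; linarith
  have hd1pos : 0 < d 1 := lt_of_lt_of_le ht htd1
  have hd2pos : 0 < d 2 := lt_of_lt_of_le ht htd2
  have hd3pos : 0 < d 3 := lt_of_lt_of_le ht htd3
  have hsum3 : d 1 + d 2 + d 3 = 2 * t + 1 := by
    rw [hd1, hd2, hd3]; simp only [htdef]; linarith
  have hne : ∀ i, d i ≠ 0 := by
    intro i
    fin_cases i
    · show d 0 ≠ 0; rw [hd0]; norm_num
    · show d 1 ≠ 0; exact ne_of_gt hd1pos
    · show d 2 ≠ 0; exact ne_of_gt hd2pos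
    · show d 3 ≠ 0; exact ne_of_gt hd3pos
  refine ⟨hne, ?_⟩
  set P : ℝ := (d 1)⁻¹ with hPdef
  set Q : ℝ := (d 2)⁻¹ with hQdef
  set R : ℝ := (d 3)⁻¹ with hRdef
  have hPpos : 0 < P := inv_pos.mpr hd1pos
  have hQpos : 0 < Q := inv_pos.mpr hd2pos
  have hRpos : 0 < R := inv_pos.mpr hd3pos
  have hPmul : d 1 * P = 1 := mul_inv_cancel₀ (ne_of_gt hd1pos)
  have hQmul : d 2 * Q = 1 := mul_inv_cancel₀ (ne_of_gt hd2pos)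
  have hRmul : d 3 * R = 1 := mul_inv_cancel₀ (ne_of_gt hd3pos)
  have hP1 : 1 ≤ P := by
    rw [hPdef]; exact (one_le_inv_iff₀.mpr ⟨hd1pos, hd1le⟩)
  have hQ1 : 1 ≤ Q := by
    rw [hQdef]; exact (one_le_inv_iff₀.mpr ⟨hd2pos, hd2le⟩)
  have hR1 : 1 ≤ R := by
    rw [hRdef]; exact (one_le_inv_iff₀.mpr ⟨hd3pos, hd3le⟩)
  have htP : t * P ≤ 1 := by
    calc t * P ≤ d 1 * P := mul_le_mul_of_nonneg_right htd1 hPpos.le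
    _ = 1 := hPmul
  have htQ : t * Q ≤ 1 := by
    calc t * Q ≤ d 2 * Q := mul_le_mul_of_nonneg_right htd2 hQpos.le
    _ = 1 := hQmul
  have htR : t * R ≤ 1 := by
    calc t * R ≤ d 3 * R := mul_le_mul_of_nonneg_right htd3 hRpos.le
    _ = 1 := hRmul
  have c1 : t * P ≤ t + 1 - d 1 := by
    nlinarith [mul_nonneg (sub_nonneg.mpr htd1) (sub_nonneg.mpr hd1le), hPmul, hd1pos, hPpos]
  have c2 : t * Q ≤ t + 1 - d 2 := by
    nlinarith [mul_nonneg (sub_nonneg.mpr htd2) (sub_nonneg.mpr hd2le), hQmul, hd2pos, hQpos]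
  have c3 : t * R ≤ t + 1 - d 3 := by
    nlinarith [mul_nonneg (sub_nonneg.mpr htd3) (sub_nonneg.mpr hd3le), hRmul, hd3pos, hRpos]
  have hB : t * (P + Q + R) ≤ t + 2 := by nlinarith [c1, c2, c3, hsum3]
  have hx : ∑ i, |(Hmat.mulVec (fun j => (d j)⁻¹)) i|
      = |1 + P + Q + R| + |1 + P - Q - R| + |1 - P + Q - R| + |1 - P - Q + R| := by
    rw [Fin.sum_univ_four]
    have e0 : (Hmat.mulVec (fun j => (d j)⁻¹)) 0 = 1 + P + Q + R := by
      simp [Hmat, Matrix.mulVec, dotProduct, Fin.sum_univ_four, hd0, hPdef, hQdef, hRdef]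
      try ring
    have e1 : (Hmat.mulVec (fun j => (d j)⁻¹)) 1 = 1 + P - Q - R := by
      simp [Hmat, Matrix.mulVec, dotProduct, Fin.sum_univ_four, hd0, hPdef, hQdef, hRdef]
      try ring
    have e2 : (Hmat.mulVec (fun j => (d j)⁻¹)) 2 = 1 - P + Q - R := by
      simp [Hmat, Matrix.mulVec, dotProduct, Fin.sum_univ_four, hd0, hPdef, hQdef, hRdef]
      try ring
    have e3 : (Hmat.mulVec (fun j => (d j)⁻¹)) 3 = 1 - P - Q + R := by
      simp [Hmat, Matrix.mulVec, dotProduct, Fin.sum_univ_four, hd0, hPdef, hQdef, hRdef]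
      try ring
    rw [e0, e1, e2, e3]
  rw [hx]
  have key := qpr_key t P Q R ht ht1 hP1 hQ1 hR1 htP htQ htR hB
  rw [le_div_iff₀ ht]
  nlinarith [key]
end

section
/- Let ε be a real number with 0 ≤ ε < 1/2, let η : Fin 3 → ℝ satisfy η i ≥ 0 for all i and Σ_i η i = ε, and let Q be a 3×3 doubly stochastic real matrix. For a vector η' : Fin 3 → ℝ define F(η') = Σ_{i} |(1/4)·(H.mulVec (fun j => ((H.mulVec (cons (1−ε) η')) j)⁻¹)) i|, where cons (1−ε) η' denotes the vector (1−ε, η' 0, η' 1, η' 2) ∈ ℝ⁴. Then F(Q.mulVec η) ≤ F(η). That is, the 1-norm of the quasi-probability representation of a single-qubit Pauli channel is a Schur-convex function of its error-probability vector. -/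
open Matrix Finset

lemma F_closed (ε : ℝ) (v : Fin 3 → ℝ) (h : v 0 + v 1 + v 2 = ε) :
    ∑ i, |(1 / 4) *
        (Hmat.mulVec
          (fun j => ((Hmat.mulVec (Matrix.vecCons (1 - ε) v)) j)⁻¹)) i| =
    |(1/4 : ℝ) * (1 + (1-2*ε+2*v 0)⁻¹ + (1-2*ε+2*v 1)⁻¹ + (1-2*ε+2*v 2)⁻¹)|
    + |(1/4 : ℝ) * (1 + (1-2*ε+2*v 0)⁻¹ - (1-2*ε+2*v 1)⁻¹ - (1-2*ε+2*v 2)⁻¹)|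
    + |(1/4 : ℝ) * (1 - (1-2*ε+2*v 0)⁻¹ + (1-2*ε+2*v 1)⁻¹ - (1-2*ε+2*v 2)⁻¹)|
    + |(1/4 : ℝ) * (1 - (1-2*ε+2*v 0)⁻¹ - (1-2*ε+2*v 1)⁻¹ + (1-2*ε+2*v 2)⁻¹)| := by
  have e0 : 1 - ε + (v 0 + v 1 + v 2) = 1 := by linarith
  have e1 : 1 - ε + (v 0 - v 1 - v 2) = 1-2*ε+2*v 0 := by linarith
  have e2 : 1 - ε + (-v 0 + v 1 - v 2) = 1-2*ε+2*v 1 := by linarith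
  have e3 : 1 - ε + (-v 0 - v 1 + v 2) = 1-2*ε+2*v 2 := by linarith
  have hx : (∑ i, |(1 / 4) *
        (Hmat.mulVec
          (fun j => ((Hmat.mulVec (Matrix.vecCons (1 - ε) v)) j)⁻¹)) i|) =
      |(1/4 : ℝ) * ((1 - ε + (v 0 + v 1 + v 2))⁻¹ + (1 - ε + (v 0 - v 1 - v 2))⁻¹
        + (1 - ε + (-v 0 + v 1 - v 2))⁻¹ + (1 - ε + (-v 0 - v 1 + v 2))⁻¹)|
      + |(1/4 : ℝ) * ((1 - ε + (v 0 + v 1 + v 2))⁻¹ + (1 - ε + (v 0 - v 1 - v 2))⁻¹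
        - (1 - ε + (-v 0 + v 1 - v 2))⁻¹ - (1 - ε + (-v 0 - v 1 + v 2))⁻¹)|
      + |(1/4 : ℝ) * ((1 - ε + (v 0 + v 1 + v 2))⁻¹ - (1 - ε + (v 0 - v 1 - v 2))⁻¹
        + (1 - ε + (-v 0 + v 1 - v 2))⁻¹ - (1 - ε + (-v 0 - v 1 + v 2))⁻¹)|
      + |(1/4 : ℝ) * ((1 - ε + (v 0 + v 1 + v 2))⁻¹ - (1 - ε + (v 0 - v 1 - v 2))⁻¹
        - (1 - ε + (-v 0 + v 1 - v 2))⁻¹ + (1 - ε + (-v 0 - v 1 + v 2))⁻¹)| := by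
    simp [Hmat, Matrix.mulVec, dotProduct, Fin.sum_univ_four, Matrix.vecHead,
      Matrix.vecTail]
    ring_nf
  rw [hx, e0, e1, e2, e3, inv_one]

lemma qpr_core (a b c M : ℝ) (ha : 1 ≤ a) (hb : 1 ≤ b) (hc : 1 ≤ c)
    (hA : a ≤ M) (hB : b ≤ M) (hC : c ≤ M) (hD : (a+b+c-1)/2 ≤ M) :
    |(1/4 : ℝ) * (1 + a + b + c)| + |(1/4 : ℝ) * (1 + a - b - c)|
    + |(1/4 : ℝ) * (1 - a + b - c)| + |(1/4 : ℝ) * (1 - a - b + c)| ≤ M := by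
  rcases abs_cases ((1/4 : ℝ) * (1 + a + b + c)) with ⟨e0, s0⟩ | ⟨e0, s0⟩ <;>
  rcases abs_cases ((1/4 : ℝ) * (1 + a - b - c)) with ⟨e1, s1⟩ | ⟨e1, s1⟩ <;>
  rcases abs_cases ((1/4 : ℝ) * (1 - a + b - c)) with ⟨e2, s2⟩ | ⟨e2, s2⟩ <;>
  rcases abs_cases ((1/4 : ℝ) * (1 - a - b + c)) with ⟨e3, s3⟩ | ⟨e3, s3⟩ <;>
  rw [e0, e1, e2, e3] <;> linarith

lemma lb1 (a b c : ℝ) :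
    a ≤ |(1/4 : ℝ) * (1 + a + b + c)| + |(1/4 : ℝ) * (1 + a - b - c)|
    + |(1/4 : ℝ) * (1 - a + b - c)| + |(1/4 : ℝ) * (1 - a - b + c)| := by
  have h0 := le_abs_self ((1/4 : ℝ) * (1 + a + b + c))
  have h1 := le_abs_self ((1/4 : ℝ) * (1 + a - b - c))
  have h2 := neg_abs_le ((1/4 : ℝ) * (1 - a + b - c))
  have h3 := neg_abs_le ((1/4 : ℝ) * (1 - a - b + c))
  linarith

lemma lb2 (a b c : ℝ) :
    b ≤ |(1/4 : ℝ) * (1 + a + b + c)| + |(1/4 : ℝ) * (1 + a - b - c)|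
    + |(1/4 : ℝ) * (1 - a + b - c)| + |(1/4 : ℝ) * (1 - a - b + c)| := by
  have h0 := le_abs_self ((1/4 : ℝ) * (1 + a + b + c))
  have h1 := neg_abs_le ((1/4 : ℝ) * (1 + a - b - c))
  have h2 := le_abs_self ((1/4 : ℝ) * (1 - a + b - c))
  have h3 := neg_abs_le ((1/4 : ℝ) * (1 - a - b + c))
  linarith

lemma lb3 (a b c : ℝ) :
    c ≤ |(1/4 : ℝ) * (1 + a + b + c)| + |(1/4 : ℝ) * (1 + a - b - c)|
    + |(1/4 : ℝ) * (1 - a + b - c)| + |(1/4 : ℝ) * (1 - a - b + c)| := by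
  have h0 := le_abs_self ((1/4 : ℝ) * (1 + a + b + c))
  have h1 := neg_abs_le ((1/4 : ℝ) * (1 + a - b - c))
  have h2 := neg_abs_le ((1/4 : ℝ) * (1 - a + b - c))
  have h3 := le_abs_self ((1/4 : ℝ) * (1 - a - b + c))
  linarith

lemma lbD (a b c : ℝ) :
    (a + b + c - 1) / 2 ≤ |(1/4 : ℝ) * (1 + a + b + c)| + |(1/4 : ℝ) * (1 + a - b - c)|
    + |(1/4 : ℝ) * (1 - a + b - c)| + |(1/4 : ℝ) * (1 - a - b + c)| := by
  have h0 := le_abs_self ((1/4 : ℝ) * (1 + a + b + c))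
  have h1 := neg_abs_le ((1/4 : ℝ) * (1 + a - b - c))
  have h2 := neg_abs_le ((1/4 : ℝ) * (1 - a + b - c))
  have h3 := neg_abs_le ((1/4 : ℝ) * (1 - a - b + c))
  linarith

lemma jensen3 (q0 q1 q2 x0 x1 x2 : ℝ) (h0 : 0 ≤ q0) (h1 : 0 ≤ q1) (h2 : 0 ≤ q2)
    (hs : q0 + q1 + q2 = 1) (hx0 : 0 < x0) (hx1 : 0 < x1) (hx2 : 0 < x2) :
    (q0*x0 + q1*x1 + q2*x2)⁻¹ ≤ q0 * x0⁻¹ + q1 * x1⁻¹ + q2 * x2⁻¹ := by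
  have hm : 0 < min x0 (min x1 x2) := lt_min hx0 (lt_min hx1 hx2)
  have a0 : q0 * min x0 (min x1 x2) ≤ q0 * x0 :=
    mul_le_mul_of_nonneg_left (min_le_left _ _) h0
  have a1 : q1 * min x0 (min x1 x2) ≤ q1 * x1 :=
    mul_le_mul_of_nonneg_left (le_trans (min_le_right _ _) (min_le_left _ _)) h1
  have a2 : q2 * min x0 (min x1 x2) ≤ q2 * x2 :=
    mul_le_mul_of_nonneg_left (le_trans (min_le_right _ _) (min_le_right _ _)) h2
  have hm2 : q0 * min x0 (min x1 x2) + q1 * min x0 (min x1 x2) + q2 * min x0 (min x1 x2)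
      = min x0 (min x1 x2) := by linear_combination (min x0 (min x1 x2)) * hs
  have hy0 : 0 < q0*x0 + q1*x1 + q2*x2 := by linarith
  have hu0 : x0 * x0⁻¹ = 1 := mul_inv_cancel₀ hx0.ne'
  have hu1 : x1 * x1⁻¹ = 1 := mul_inv_cancel₀ hx1.ne'
  have hu2 : x2 * x2⁻¹ = 1 := mul_inv_cancel₀ hx2.ne'
  have e01 : x0 * x1⁻¹ + x1 * x0⁻¹ - 2 = (x0 - x1)^2 * (x0⁻¹ * x1⁻¹) := by
    field_simp
    ring
  have e02 : x0 * x2⁻¹ + x2 * x0⁻¹ - 2 = (x0 - x2)^2 * (x0⁻¹ * x2⁻¹) := by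
    field_simp
    ring
  have e12 : x1 * x2⁻¹ + x2 * x1⁻¹ - 2 = (x1 - x2)^2 * (x1⁻¹ * x2⁻¹) := by
    field_simp
    ring
  have k01 : 0 ≤ q0 * q1 * (x0 * x1⁻¹ + x1 * x0⁻¹ - 2) := by
    rw [e01]; positivity
  have k02 : 0 ≤ q0 * q2 * (x0 * x2⁻¹ + x2 * x0⁻¹ - 2) := by
    rw [e02]; positivity
  have k12 : 0 ≤ q1 * q2 * (x1 * x2⁻¹ + x2 * x1⁻¹ - 2) := by
    rw [e12]; positivity
  have hs2 : q0^2 + q1^2 + q2^2 + 2*(q0*q1) + 2*(q0*q2) + 2*(q1*q2) = 1 := by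
    linear_combination (q0 + q1 + q2 + 1) * hs
  have expand : (q0 * x0⁻¹ + q1 * x1⁻¹ + q2 * x2⁻¹) * (q0*x0 + q1*x1 + q2*x2)
      = q0^2 * (x0 * x0⁻¹) + q1^2 * (x1 * x1⁻¹) + q2^2 * (x2 * x2⁻¹)
        + (q0*q1*(x0 * x1⁻¹ + x1 * x0⁻¹ - 2) + q0*q2*(x0 * x2⁻¹ + x2 * x0⁻¹ - 2)
          + q1*q2*(x1 * x2⁻¹ + x2 * x1⁻¹ - 2))
        + 2*(q0*q1) + 2*(q0*q2) + 2*(q1*q2) := by ring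
  rw [hu0, hu1, hu2] at expand
  rw [inv_eq_one_div, div_le_iff₀ hy0, expand]
  linarith [k01, k02, k12, hs2]

/-- The 1-norm of the quasi-probability representation of a single-qubit Pauli
channel is a Schur-convex function of its error-probability vector: applying a
doubly stochastic matrix to the error-probability vector does not increase it. -/
theorem qpr_one_norm_schur_convex
    (ε : ℝ) (hε0 : 0 ≤ ε) (hε1 : ε < 1 / 2)
    (η : Fin 3 → ℝ) (hη : ∀ i, 0 ≤ η i) (hsum : ∑ i, η i = ε)
    (Q : Matrix (Fin 3) (Fin 3) ℝ)
    (hQ : ∀ i j, 0 ≤ Q i j)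
    (hQrow : ∀ i, ∑ j, Q i j = 1)
    (hQcol : ∀ j, ∑ i, Q i j = 1) :
    ∑ i, |(1 / 4) *
        (Hmat.mulVec
          (fun j => ((Hmat.mulVec (Matrix.vecCons (1 - ε) (Q.mulVec η))) j)⁻¹)) i| ≤
    ∑ i, |(1 / 4) *
        (Hmat.mulVec
          (fun j => ((Hmat.mulVec (Matrix.vecCons (1 - ε) η)) j)⁻¹)) i| := by
  have hc0 : (0:ℝ) < 1 - 2*ε := by linarith
  have hs3 : η 0 + η 1 + η 2 = ε := by
    have := hsum; rwa [Fin.sum_univ_three] at this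
  have hrow : ∀ i, Q i 0 + Q i 1 + Q i 2 = 1 := fun i => by
    have := hQrow i; rwa [Fin.sum_univ_three] at this
  have hcol : ∀ j, Q 0 j + Q 1 j + Q 2 j = 1 := fun j => by
    have := hQcol j; rwa [Fin.sum_univ_three] at this
  have hme : ∀ i, (Q.mulVec η) i = Q i 0 * η 0 + Q i 1 * η 1 + Q i 2 * η 2 := by
    intro i
    simp [Matrix.mulVec, dotProduct, Fin.sum_univ_three]
  have hη' : ∀ i, 0 ≤ (Q.mulVec η) i := by
    intro i; rw [hme i]
    have g0 := mul_nonneg (hQ i 0) (hη 0)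
    have g1 := mul_nonneg (hQ i 1) (hη 1)
    have g2 := mul_nonneg (hQ i 2) (hη 2)
    linarith
  have hsum' : (Q.mulVec η) 0 + (Q.mulVec η) 1 + (Q.mulVec η) 2 = ε := by
    rw [hme 0, hme 1, hme 2]
    linear_combination η 0 * hcol 0 + η 1 * hcol 1 + η 2 * hcol 2 + hs3
  have hposd : ∀ t : ℝ, 0 ≤ t → 0 < 1-2*ε+2*t := fun t ht => by linarith
  have hone : ∀ t : ℝ, 0 ≤ t → t ≤ ε → 1 ≤ (1-2*ε+2*t)⁻¹ := by
    intro t h1 h2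
    have h3 : 1-2*ε+2*t ≤ 1 := by linarith
    have h4 := inv_anti₀ (hposd t h1) h3
    simpa using h4
  obtain ⟨j₀, -, hj₀⟩ := Finset.exists_min_image (Finset.univ : Finset (Fin 3)) η
    ⟨0, Finset.mem_univ 0⟩
  have hj₀' : ∀ i : Fin 3, η j₀ ≤ η i := fun i => hj₀ i (Finset.mem_univ i)
  have hη'ge : ∀ i, η j₀ ≤ (Q.mulVec η) i := by
    intro i; rw [hme i]
    have g0 := mul_le_mul_of_nonneg_left (hj₀' 0) (hQ i 0)
    have g1 := mul_le_mul_of_nonneg_left (hj₀' 1) (hQ i 1)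
    have g2 := mul_le_mul_of_nonneg_left (hj₀' 2) (hQ i 2)
    have g3 : Q i 0 * η j₀ + Q i 1 * η j₀ + Q i 2 * η j₀ = η j₀ := by
      linear_combination (η j₀) * hrow i
    linarith
  have hsumF : ∑ k, (Q.mulVec η) k = ε := by
    rw [Fin.sum_univ_three]; exact hsum'
  have hε'le : ∀ i, (Q.mulVec η) i ≤ ε := by
    intro i
    have := Finset.single_le_sum (fun k _ => hη' k) (Finset.mem_univ i)
    rwa [hsumF] at this
  rw [F_closed ε (Q.mulVec η) hsum', F_closed ε η hs3]
  have L0 := lb1 ((1-2*ε+2*η 0)⁻¹) ((1-2*ε+2*η 1)⁻¹) ((1-2*ε+2*η 2)⁻¹)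
  have L1 := lb2 ((1-2*ε+2*η 0)⁻¹) ((1-2*ε+2*η 1)⁻¹) ((1-2*ε+2*η 2)⁻¹)
  have L2 := lb3 ((1-2*ε+2*η 0)⁻¹) ((1-2*ε+2*η 1)⁻¹) ((1-2*ε+2*η 2)⁻¹)
  have LD := lbD ((1-2*ε+2*η 0)⁻¹) ((1-2*ε+2*η 1)⁻¹) ((1-2*ε+2*η 2)⁻¹)
  have hmono : ∀ i, (1-2*ε+2*(Q.mulVec η) i)⁻¹ ≤ (1-2*ε+2*η j₀)⁻¹ := by
    intro i
    exact inv_anti₀ (hposd _ (hη j₀)) (by linarith [hη'ge i])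
  have hBj₀ : (1-2*ε+2*η j₀)⁻¹ ≤
      |(1/4 : ℝ) * (1 + (1-2*ε+2*η 0)⁻¹ + (1-2*ε+2*η 1)⁻¹ + (1-2*ε+2*η 2)⁻¹)|
      + |(1/4 : ℝ) * (1 + (1-2*ε+2*η 0)⁻¹ - (1-2*ε+2*η 1)⁻¹ - (1-2*ε+2*η 2)⁻¹)|
      + |(1/4 : ℝ) * (1 - (1-2*ε+2*η 0)⁻¹ + (1-2*ε+2*η 1)⁻¹ - (1-2*ε+2*η 2)⁻¹)|
      + |(1/4 : ℝ) * (1 - (1-2*ε+2*η 0)⁻¹ - (1-2*ε+2*η 1)⁻¹ + (1-2*ε+2*η 2)⁻¹)| := by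
    fin_cases j₀
    · exact L0
    · exact L1
    · exact L2
  have hjen : ∀ i, (1-2*ε+2*(Q.mulVec η) i)⁻¹ ≤
      Q i 0 * (1-2*ε+2*η 0)⁻¹ + Q i 1 * (1-2*ε+2*η 1)⁻¹ + Q i 2 * (1-2*ε+2*η 2)⁻¹ := by
    intro i
    have e : Q i 0 * (1-2*ε+2*η 0) + Q i 1 * (1-2*ε+2*η 1) + Q i 2 * (1-2*ε+2*η 2)
        = 1-2*ε+2*(Q.mulVec η) i := by
      rw [hme i]; linear_combination (1-2*ε) * hrow i
    rw [← e]
    exact jensen3 _ _ _ _ _ _ (hQ i 0) (hQ i 1) (hQ i 2) (hrow i)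
      (hposd _ (hη 0)) (hposd _ (hη 1)) (hposd _ (hη 2))
  have hsumB : (1-2*ε+2*(Q.mulVec η) 0)⁻¹ + (1-2*ε+2*(Q.mulVec η) 1)⁻¹
      + (1-2*ε+2*(Q.mulVec η) 2)⁻¹
      ≤ (1-2*ε+2*η 0)⁻¹ + (1-2*ε+2*η 1)⁻¹ + (1-2*ε+2*η 2)⁻¹ := by
    have c0 : Q 0 0 * (1-2*ε+2*η 0)⁻¹ + Q 1 0 * (1-2*ε+2*η 0)⁻¹ + Q 2 0 * (1-2*ε+2*η 0)⁻¹
        = (1-2*ε+2*η 0)⁻¹ := by linear_combination ((1-2*ε+2*η 0)⁻¹) * hcol 0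
    have c1 : Q 0 1 * (1-2*ε+2*η 1)⁻¹ + Q 1 1 * (1-2*ε+2*η 1)⁻¹ + Q 2 1 * (1-2*ε+2*η 1)⁻¹
        = (1-2*ε+2*η 1)⁻¹ := by linear_combination ((1-2*ε+2*η 1)⁻¹) * hcol 1
    have c2 : Q 0 2 * (1-2*ε+2*η 2)⁻¹ + Q 1 2 * (1-2*ε+2*η 2)⁻¹ + Q 2 2 * (1-2*ε+2*η 2)⁻¹
        = (1-2*ε+2*η 2)⁻¹ := by linear_combination ((1-2*ε+2*η 2)⁻¹) * hcol 2
    linarith [hjen 0, hjen 1, hjen 2]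
  apply qpr_core
  · exact hone _ (hη' 0) (hε'le 0)
  · exact hone _ (hη' 1) (hε'le 1)
  · exact hone _ (hη' 2) (hε'le 2)
  · exact le_trans (hmono 0) hBj₀
  · exact le_trans (hmono 1) hBj₀
  · exact le_trans (hmono 2) hBj₀
  · linarith [hsumB, LD]
end

section
/- Let ι be a nonempty finite type, let Q be a doubly stochastic real matrix indexed by ι, let x : ι → ℝ, and set s = Σ_i x i. Then Σ_i |2·(Q.mulVec x) i − s| ≤ Σ_i |2·x i − s|. -/
open Matrix Finset

/-- Schur-convexity of x ↦ Σ_i |2 x i − s| (s the total of x) under doubly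
stochastic transformations. -/
theorem abs_sum_schur_convex
    {ι : Type*} [Fintype ι] [Nonempty ι]
    (Q : Matrix ι ι ℝ)
    (hQ : ∀ i j, 0 ≤ Q i j)
    (hQrow : ∀ i, ∑ j, Q i j = 1)
    (hQcol : ∀ j, ∑ i, Q i j = 1)
    (x : ι → ℝ) (s : ℝ) (hs : s = ∑ i, x i) :
    ∑ i, |2 * (Q.mulVec x) i - s| ≤ ∑ i, |2 * x i - s| := by
  have key : ∀ i, 2 * (Q.mulVec x) i - s = ∑ j, Q i j * (2 * x j - s) := by
    intro i
    simp only [mulVec, dotProduct]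
    have : ∑ j, Q i j * (2 * x j - s) = 2 * ∑ j, Q i j * x j - s * ∑ j, Q i j := by
      rw [Finset.mul_sum, Finset.mul_sum, ← Finset.sum_sub_distrib]
      congr 1; ext j; ring
    rw [this, hQrow]; ring
  calc ∑ i, |2 * (Q.mulVec x) i - s|
      ≤ ∑ i, ∑ j, Q i j * |2 * x j - s| := by
        apply Finset.sum_le_sum
        intro i _
        rw [key i]
        refine (Finset.abs_sum_le_sum_abs _ _).trans ?_
        apply Finset.sum_le_sum
        intro j _
        rw [abs_mul, abs_of_nonneg (hQ i j)]
    _ = ∑ j, (∑ i, Q i j) * |2 * x j - s| := by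
        rw [Finset.sum_comm]
        simp [Finset.sum_mul]
    _ = ∑ i, |2 * x i - s| := by
        simp [hQcol]
end

section
/- Let N and r be positive natural numbers and let K : Fin r → Matrix (Fin N) (Fin N) ℂ be a finite family of complex N×N matrices such that I − Σ_i (K i)ᴴ ⬝ (K i) is positive semidefinite (the completely-positive trace-non-increasing condition on the Kraus operators). Then the Frobenius norm of Σ_i ((K i).map star) ⊗ (K i) is at most N, i.e. √( Σ_{p,q} ‖(Σ_i ((K i).map star) ⊗ (K i)) p q‖² ) ≤ N. -/
open Matrix Finset
open scoped Kronecker ComplexOrder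

private lemma swap4 {α β γ δ M : Type*} [Fintype α] [Fintype β] [Fintype γ] [Fintype δ]
    [AddCommMonoid M] (g : α → β → γ → δ → M) :
    ∑ a, ∑ b, ∑ c, ∑ d, g a b c d = ∑ c, ∑ d, ∑ a, ∑ b, g a b c d := by
  calc ∑ a, ∑ b, ∑ c, ∑ d, g a b c d
      = ∑ a, ∑ c, ∑ b, ∑ d, g a b c d :=
        Finset.sum_congr rfl fun a _ => Finset.sum_comm
    _ = ∑ c, ∑ a, ∑ b, ∑ d, g a b c d := Finset.sum_comm
    _ = ∑ c, ∑ a, ∑ d, ∑ b, g a b c d :=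
        Finset.sum_congr rfl fun c _ => Finset.sum_congr rfl fun a _ => Finset.sum_comm
    _ = ∑ c, ∑ d, ∑ a, ∑ b, g a b c d :=
        Finset.sum_congr rfl fun c _ => Finset.sum_comm

/-- The Frobenius norm of the matrix representation Σ_i (conj K i) ⊗ K i of a
completely positive trace-non-increasing map with Kraus operators K i on an
N-dimensional system is at most N. -/
theorem cptni_matrix_rep_frobenius_bound
    (N r : ℕ) (hN : 0 < N) (hr : 0 < r)
    (K : Fin r → Matrix (Fin N) (Fin N) ℂ)
    (hK : ((1 : Matrix (Fin N) (Fin N) ℂ) - ∑ i, (K i)ᴴ * K i).PosSemidef) :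
    Real.sqrt (∑ p : Fin N × Fin N, ∑ q : Fin N × Fin N,
        ‖(∑ i, ((K i).map star) ⊗ₖ (K i)) p q‖ ^ 2) ≤ (N : ℝ) := by
  set c : Fin r → Fin r → ℂ :=
    fun i j => ∑ z : Fin N × Fin N, star (K i z.1 z.2) * K j z.1 z.2 with hc
  set t : Fin r → ℝ := fun i => ∑ z : Fin N × Fin N, ‖K i z.1 z.2‖ ^ 2 with ht
  have hM : ∀ p q : Fin N × Fin N,
      (∑ i, ((K i).map star) ⊗ₖ (K i)) p q
        = ∑ i, star (K i p.1 q.1) * K i p.2 q.2 := by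
    intro p q
    simp [Matrix.sum_apply, Matrix.kroneckerMap_apply, Matrix.map_apply]
  have normlem : ∀ z : ℂ, ‖z‖ ^ 2 = (z * star z).re := by
    intro z
    simp [Complex.mul_conj, Complex.normSq_eq_norm_sq]
    rw [← Complex.ofReal_pow, Complex.ofReal_re]
  -- the factorization per pair (i,j)
  have factor : ∀ i j : Fin r,
      (∑ p : Fin N × Fin N, ∑ q : Fin N × Fin N,
        (star (K i p.1 q.1) * K i p.2 q.2) * star (star (K j p.1 q.1) * K j p.2 q.2))
      = c i j * star (c i j) := by
    intro i j
    rw [hc]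
    simp only [star_sum, Finset.sum_mul_sum, Fintype.sum_prod_type]
    refine Finset.sum_congr rfl fun p1 _ => ?_
    refine Finset.sum_congr rfl fun q1 _ => Finset.sum_congr rfl fun p2 _ =>
      Finset.sum_congr rfl fun q2 _ => ?_
    simp only [star_mul', star_star]
    ring
  -- rewrite the Frobenius sum in terms of the Gram coefficients c i j
  have cx : (∑ p : Fin N × Fin N, ∑ q : Fin N × Fin N,
        ((∑ i, star (K i p.1 q.1) * K i p.2 q.2) *
          star (∑ i, star (K i p.1 q.1) * K i p.2 q.2)))
      = ∑ i, ∑ j, c i j * star (c i j) := by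
    simp only [star_sum, Finset.sum_mul_sum]
    rw [swap4]
    exact Finset.sum_congr rfl fun i _ => Finset.sum_congr rfl fun j _ => factor i j
  have S_eq : (∑ p : Fin N × Fin N, ∑ q : Fin N × Fin N,
        ‖(∑ i, ((K i).map star) ⊗ₖ (K i)) p q‖ ^ 2) = ∑ i, ∑ j, ‖c i j‖ ^ 2 := by
    calc (∑ p : Fin N × Fin N, ∑ q : Fin N × Fin N,
          ‖(∑ i, ((K i).map star) ⊗ₖ (K i)) p q‖ ^ 2)
        = ∑ p : Fin N × Fin N, ∑ q : Fin N × Fin N,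
            ((∑ i, star (K i p.1 q.1) * K i p.2 q.2) *
              star (∑ i, star (K i p.1 q.1) * K i p.2 q.2)).re := by
          refine Finset.sum_congr rfl fun p _ => Finset.sum_congr rfl fun q _ => ?_
          rw [hM p q] at *
          rw [← hM p q, normlem, hM p q]
      _ = (∑ p : Fin N × Fin N, ∑ q : Fin N × Fin N,
            ((∑ i, star (K i p.1 q.1) * K i p.2 q.2) *
              star (∑ i, star (K i p.1 q.1) * K i p.2 q.2))).re := by
          simp [Complex.re_sum]
      _ = (∑ i, ∑ j, c i j * star (c i j)).re := by rw [cx]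
      _ = ∑ i, ∑ j, ‖c i j‖ ^ 2 := by
          simp only [Complex.re_sum]
          exact Finset.sum_congr rfl fun i _ => Finset.sum_congr rfl fun j _ =>
            (normlem _).symm
  -- Cauchy-Schwarz
  have hcs : ∀ i j, ‖c i j‖ ^ 2 ≤ t i * t j := by
    intro i j
    have h1 : ‖c i j‖ ≤ ∑ z : Fin N × Fin N, ‖K i z.1 z.2‖ * ‖K j z.1 z.2‖ := by
      refine (norm_sum_le _ _).trans_eq ?_
      exact Finset.sum_congr rfl fun z _ => by rw [norm_mul, norm_star]
    have h2 := Finset.sum_mul_sq_le_sq_mul_sq Finset.univ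
      (fun z : Fin N × Fin N => ‖K i z.1 z.2‖) (fun z => ‖K j z.1 z.2‖)
    calc ‖c i j‖ ^ 2 ≤ (∑ z : Fin N × Fin N, ‖K i z.1 z.2‖ * ‖K j z.1 z.2‖) ^ 2 :=
          pow_le_pow_left₀ (norm_nonneg _) h1 2
      _ ≤ t i * t j := h2
  have tnonneg : ∀ i, 0 ≤ t i := fun i => Finset.sum_nonneg fun z _ => sq_nonneg _
  -- trace bound
  have hdiag : ∀ k : Fin N, ((∑ i, (K i)ᴴ * K i) k k).re ≤ 1 := by
    intro k
    have h := hK.dotProduct_mulVec_nonneg (Pi.single k 1)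
    have he : star (Pi.single k 1 : Fin N → ℂ) ⬝ᵥ
        (((1 : Matrix (Fin N) (Fin N) ℂ) - ∑ i, (K i)ᴴ * K i) *ᵥ Pi.single k 1)
        = ((1 : Matrix (Fin N) (Fin N) ℂ) - ∑ i, (K i)ᴴ * K i) k k := by
      simp [dotProduct, mulVec, Pi.single_apply, Finset.sum_ite_eq, mul_comm]
    rw [he] at h
    have h2 := (Complex.nonneg_iff.mp h).1
    rw [Matrix.sub_apply, Matrix.one_apply_eq] at h2
    simpa using h2
  have sumt : ∑ i, t i ≤ (N : ℝ) := by
    have key : ∑ i, t i = ∑ k : Fin N, ((∑ i, (K i)ᴴ * K i) k k).re := by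
      have hA : ∀ k : Fin N, ((∑ i, (K i)ᴴ * K i) k k).re
          = ∑ i, ∑ p : Fin N, ‖K i p k‖ ^ 2 := by
        intro k
        rw [Matrix.sum_apply]
        rw [Complex.re_sum]
        refine Finset.sum_congr rfl fun i _ => ?_
        rw [Matrix.mul_apply, Complex.re_sum]
        refine Finset.sum_congr rfl fun p _ => ?_
        rw [Matrix.conjTranspose_apply, mul_comm, ← normlem]
      simp only [hA, ht, Fintype.sum_prod_type]
      calc ∑ i : Fin r, ∑ x : Fin N, ∑ y : Fin N, ‖K i x y‖ ^ 2
          = ∑ i : Fin r, ∑ y : Fin N, ∑ x : Fin N, ‖K i x y‖ ^ 2 :=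
            Finset.sum_congr rfl fun i _ => Finset.sum_comm
        _ = ∑ y : Fin N, ∑ i : Fin r, ∑ x : Fin N, ‖K i x y‖ ^ 2 := Finset.sum_comm
    calc ∑ i, t i = ∑ k : Fin N, ((∑ i, (K i)ᴴ * K i) k k).re := key
      _ ≤ ∑ _k : Fin N, (1 : ℝ) := Finset.sum_le_sum fun k _ => hdiag k
      _ = (N : ℝ) := by simp
  -- put it together
  have Sle : (∑ p : Fin N × Fin N, ∑ q : Fin N × Fin N,
      ‖(∑ i, ((K i).map star) ⊗ₖ (K i)) p q‖ ^ 2) ≤ (N : ℝ) ^ 2 := by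
    rw [S_eq]
    calc ∑ i, ∑ j, ‖c i j‖ ^ 2 ≤ ∑ i, ∑ j, t i * t j :=
          Finset.sum_le_sum fun i _ => Finset.sum_le_sum fun j _ => hcs i j
      _ = (∑ i, t i) ^ 2 := by rw [sq, Finset.sum_mul_sum]
      _ ≤ (N : ℝ) ^ 2 :=
          pow_le_pow_left₀ (Finset.sum_nonneg fun i _ => tnonneg i) sumt 2
  calc Real.sqrt (∑ p : Fin N × Fin N, ∑ q : Fin N × Fin N,
        ‖(∑ i, ((K i).map star) ⊗ₖ (K i)) p q‖ ^ 2)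
      ≤ Real.sqrt ((N : ℝ) ^ 2) := Real.sqrt_le_sqrt Sle
    _ = (N : ℝ) := Real.sqrt_sq (Nat.cast_nonneg N)
end
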